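/- arXiv:1605.09601 — 3 statements merged into one kernel-verified Lean document; each statement's English description precedes it below -/
import Mathlib

section
/- Let ρ > 1, Q > 0, and let integers M ≤ N be given with N ≥ 1. Let f : [-1,1] → ℝ be given by a uniformly convergent Chebyshev series f(x) = Σ_{n≥0} a_n T_n(x) with |a_0| ≤ Q and |a_n| ≤ 2Q ρ^{-n} for n ≥ 1. Let c ∈ ℝ^{M+1} be the solution of the (unperturbed) normal equations T_M(x^{equi})ᵀ T_M(x^{equi}) c = T_M(x^{equi})ᵀ f(x^{equi}). Then for every 0 ≤ k ≤ M, |c_k| ≤ 2Q [ ρ^{-k} + ((N+1)^{1/2} / σ_{M+1}(T_M(x^{equi}))) · ρ^{-M}/(ρ−1) ]. -/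
open Matrix MeasureTheory
open scoped BigOperators

/-- Chebyshev polynomial of the first kind `T_n`, as a function `ℝ → ℝ`. -/
noncomputable def cheb (n : ℕ) (x : ℝ) : ℝ :=
  (Polynomial.Chebyshev.T ℝ (n : ℤ)).eval x

/-- The equally spaced grid `x_k = 2k/N - 1`, `k = 0, …, N`, on `[-1,1]`. -/
noncomputable def xequi (N : ℕ) (k : Fin (N + 1)) : ℝ :=
  2 * (k : ℝ) / (N : ℝ) - 1

/-- The `(N+1) × (M+1)` Chebyshev–Vandermonde matrix at the equally spaced grid. -/
noncomputable def chebVand (N M : ℕ) : Matrix (Fin (N + 1)) (Fin (M + 1)) ℝ :=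
  Matrix.of fun i j => cheb (j : ℕ) (xequi N i)

/-- The Euclidean norm of a vector in `ℝ^n`. -/
noncomputable def enorm2 {n : ℕ} (v : Fin n → ℝ) : ℝ :=
  Real.sqrt (∑ i, (v i) ^ 2)

/-- The smallest singular value of a matrix, as the infimum of `‖A v‖₂` over unit vectors. -/
noncomputable def sigmaMin {m n : ℕ} (A : Matrix (Fin m) (Fin n) ℝ) : ℝ :=
  sInf {r | ∃ v : Fin n → ℝ, enorm2 v = 1 ∧ r = enorm2 (A.mulVec v)}

/-- The largest singular value of a matrix, as the supremum of `‖A v‖₂` over unit vectors. -/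
noncomputable def sigmaMax {m n : ℕ} (A : Matrix (Fin m) (Fin n) ℝ) : ℝ :=
  sSup {r | ∃ v : Fin n → ℝ, enorm2 v = 1 ∧ r = enorm2 (A.mulVec v)}

section Aux

open Polynomial Polynomial.Chebyshev

lemma Tdeg : ∀ n : ℕ, (T ℝ (n : ℤ)).natDegree ≤ n ∧ (T ℝ (n : ℤ)).coeff n = 2 ^ (n - 1) := by
  intro n
  induction n using Nat.twoStepInduction with
  | zero => simp [T_zero]
  | one => simp [T_one]
  | more n ih1 ih2 =>
    have h : (T ℝ ((n + 2 : ℕ) : ℤ)) = 2 * X * T ℝ ((n+1 : ℕ) : ℤ) - T ℝ (n : ℤ) := by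
      push_cast
      rw [show ((n : ℤ) + 2) = (n : ℤ) + 2 from rfl, T_add_two]
    constructor
    · rw [h]
      refine (natDegree_sub_le _ _).trans ?_
      simp only [max_le_iff]
      constructor
      · calc (2 * X * T ℝ ((n+1:ℕ):ℤ)).natDegree ≤ (2*X : ℝ[X]).natDegree + (T ℝ ((n+1:ℕ):ℤ)).natDegree := natDegree_mul_le
          _ ≤ 1 + (n+1) := by
              gcongr
              · exact (natDegree_C_mul_le 2 X).trans (by simp)
              · exact ih2.1
          _ = n + 2 := by ring
      · exact ih1.1.trans (by omega)
    · rw [h, coeff_sub]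
      have h1 : (T ℝ (n : ℤ)).coeff (n+2) = 0 :=
        coeff_eq_zero_of_natDegree_lt (lt_of_le_of_lt ih1.1 (by omega))
      have h2 : (2 * X * T ℝ ((n+1:ℕ):ℤ)).coeff (n+2) = 2 * (T ℝ ((n+1:ℕ):ℤ)).coeff (n+1) := by
        have hC : (2 : ℝ[X]) * X * T ℝ ((n+1:ℕ):ℤ) = C 2 * (X * T ℝ ((n+1:ℕ):ℤ)) := by
          rw [mul_assoc]; exact congrArg (· * (X * T ℝ ((n+1:ℕ):ℤ))) (map_ofNat Polynomial.C 2).symm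
        rw [hC, coeff_C_mul, coeff_X_mul]
      rw [h1, h2, ih2.2]
      simp
      ring

lemma xequi_inj (N : ℕ) (hN : 1 ≤ N) : Function.Injective (xequi N) := by
  intro k k' h
  have hN' : (N : ℝ) ≠ 0 := by positivity
  have : (k : ℝ) = (k' : ℝ) := by
    unfold xequi at h
    field_simp at h
    linarith
  exact Fin.ext (by exact_mod_cast this)

lemma mulVec_eq_zero (N M : ℕ) (hMN : M ≤ N) (hN : 1 ≤ N) (v : Fin (M + 1) → ℝ)
    (h : (chebVand N M).mulVec v = 0) : v = 0 := by
  set p : ℝ[X] := ∑ j : Fin (M + 1), Polynomial.C (v j) * T ℝ ((j : ℕ) : ℤ) with hp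
  have hdeg : p.natDegree ≤ M := by
    refine natDegree_sum_le_of_forall_le _ _ (fun j _ => ?_)
    refine natDegree_mul_le.trans ?_
    simpa using (Tdeg (j : ℕ)).1.trans (Nat.le_of_lt_succ j.2)
  have heval : ∀ i : Fin (N + 1), p.eval (xequi N i) = 0 := by
    intro i
    have := congrFun h i
    simp only [Matrix.mulVec, dotProduct, chebVand, Matrix.of_apply, Pi.zero_apply] at this
    rw [hp, eval_finset_sum]
    simpa [cheb, mul_comm] using this
  have hp0 : p = 0 :=
    p.eq_zero_of_natDegree_lt_card_of_eval_eq_zero (xequi_inj N hN) heval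
      (by simpa using lt_of_le_of_lt hdeg (Nat.lt_succ_of_le hMN))
  have helper : ∀ j : Fin (M + 1), (∀ j' : Fin (M + 1), (j : ℕ) < (j' : ℕ) → v j' = 0) → v j = 0 := by
    intro j hbig
    have hcoeff : p.coeff (j : ℕ) = 0 := by rw [hp0]; simp
    rw [hp, finset_sum_coeff] at hcoeff
    have hsum : ∑ b : Fin (M + 1), (Polynomial.C (v b) * T ℝ ((b : ℕ) : ℤ)).coeff (j : ℕ)
        = v j * 2 ^ ((j : ℕ) - 1) := by
      rw [Finset.sum_eq_single j]
      · rw [coeff_C_mul, (Tdeg (j : ℕ)).2]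
      · intro b _ hb
        rcases lt_or_gt_of_ne (fun e : (b : ℕ) = (j : ℕ) => hb (Fin.ext e)) with hlt | hgt
        · rw [coeff_C_mul, coeff_eq_zero_of_natDegree_lt (lt_of_le_of_lt (Tdeg (b : ℕ)).1 hlt),
            mul_zero]
        · rw [hbig b hgt]; simp
      · intro hj; exact absurd (Finset.mem_univ j) hj
    rw [hsum] at hcoeff
    have h2 : (2 : ℝ) ^ ((j : ℕ) - 1) ≠ 0 := by positivity
    exact (mul_eq_zero.mp hcoeff).resolve_right h2
  have key : ∀ t : ℕ, ∀ j : Fin (M + 1), M ≤ (j : ℕ) + t → v j = 0 := by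
    intro t
    induction t with
    | zero =>
      intro j hj
      refine helper j (fun j' hj' => absurd (Nat.lt_succ_of_le (Nat.le_of_lt_succ j'.2)) ?_)
      omega
    | succ t ih =>
      intro j hj
      exact helper j (fun j' hj' => ih j' (by omega))
  funext j
  exact key M j (by omega)

lemma enorm2_nonneg {n : ℕ} (v : Fin n → ℝ) : 0 ≤ enorm2 v := Real.sqrt_nonneg _

lemma enorm2_eq_norm {n : ℕ} (v : Fin n → ℝ) :
    enorm2 v = ‖(WithLp.equiv 2 (Fin n → ℝ)).symm v‖ := by
  rw [EuclideanSpace.norm_eq]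
  simp [enorm2, sq_abs]

lemma enorm2_eq_zero {n : ℕ} (v : Fin n → ℝ) : enorm2 v = 0 ↔ v = 0 := by
  unfold enorm2
  rw [Real.sqrt_eq_zero (Finset.sum_nonneg fun i _ => sq_nonneg _),
    Finset.sum_eq_zero_iff_of_nonneg fun i _ => sq_nonneg _]
  constructor
  · intro h; funext i
    exact (pow_eq_zero_iff (two_ne_zero)).mp (h i (Finset.mem_univ i))
  · rintro rfl i _; simp

lemma enorm2_smul {n : ℕ} (t : ℝ) (v : Fin n → ℝ) : enorm2 (t • v) = |t| * enorm2 v := by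
  rw [enorm2_eq_norm, enorm2_eq_norm, ← Real.norm_eq_abs]
  exact norm_smul t _

lemma bddBelow_S {m n : ℕ} (A : Matrix (Fin m) (Fin n) ℝ) :
    BddBelow {r | ∃ v : Fin n → ℝ, enorm2 v = 1 ∧ r = enorm2 (A.mulVec v)} :=
  ⟨0, fun r ⟨v, _, hr⟩ => hr ▸ enorm2_nonneg _⟩

lemma sigmaMin_le {m n : ℕ} (A : Matrix (Fin m) (Fin n) ℝ) (v : Fin n → ℝ)
    (hv : enorm2 v = 1) : sigmaMin A ≤ enorm2 (A.mulVec v) :=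
  csInf_le (bddBelow_S A) ⟨v, hv, rfl⟩

lemma sigmaMin_pos {m n : ℕ} (hn : 0 < n) (A : Matrix (Fin m) (Fin n) ℝ)
    (hA : ∀ v : Fin n → ℝ, A.mulVec v = 0 → v = 0) : 0 < sigmaMin A := by
  set E := EuclideanSpace ℝ (Fin n)
  have hne' : Nonempty (Fin n) := ⟨⟨0, hn⟩⟩
  have : Nontrivial E := inferInstance
  set g : E → ℝ := fun v => enorm2 (A.mulVec ((WithLp.equiv 2 (Fin n → ℝ)) v)) with hg
  have hS : {r | ∃ v : Fin n → ℝ, enorm2 v = 1 ∧ r = enorm2 (A.mulVec v)}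
      = g '' (Metric.sphere (0 : E) 1) := by
    ext r
    constructor
    · rintro ⟨v, hv1, rfl⟩
      refine ⟨(WithLp.equiv 2 (Fin n → ℝ)).symm v, ?_, rfl⟩
      rw [mem_sphere_zero_iff_norm, ← enorm2_eq_norm]; exact hv1
    · rintro ⟨v, hv1, rfl⟩
      refine ⟨(WithLp.equiv 2 (Fin n → ℝ)) v, ?_, rfl⟩
      rw [mem_sphere_zero_iff_norm] at hv1
      rw [enorm2_eq_norm]
      simpa using hv1
  have hgc : Continuous g := by
    let L : E →ₗ[ℝ] EuclideanSpace ℝ (Fin m) :=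
      (WithLp.linearEquiv 2 ℝ (Fin m → ℝ)).symm.toLinearMap ∘ₗ A.mulVecLin ∘ₗ
        (WithLp.linearEquiv 2 ℝ (Fin n → ℝ)).toLinearMap
    have hL : Continuous L := L.continuous_of_finiteDimensional
    have : g = fun v => ‖L v‖ := by
      funext v; rw [hg]; exact enorm2_eq_norm _
    rw [this]
    exact hL.norm
  have hcomp : IsCompact (g '' (Metric.sphere (0 : E) 1)) :=
    (isCompact_sphere 0 1).image hgc
  have hne : (g '' (Metric.sphere (0 : E) 1)).Nonempty :=
    Set.Nonempty.image _ (NormedSpace.sphere_nonempty.mpr zero_le_one)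
  have hmem : sInf (g '' (Metric.sphere (0 : E) 1)) ∈ g '' (Metric.sphere (0 : E) 1) :=
    hcomp.sInf_mem hne
  rw [sigmaMin, hS]
  obtain ⟨v, hv, hval⟩ := hmem
  rw [← hval]
  rw [hg]
  have hv0 : (WithLp.equiv 2 (Fin n → ℝ)) v ≠ 0 := by
    intro h
    rw [mem_sphere_zero_iff_norm] at hv
    have : v = 0 := by
      have := congrArg (WithLp.equiv 2 (Fin n → ℝ)).symm h
      simpa using this
    rw [this] at hv; simp at hv
  have hAv : A.mulVec ((WithLp.equiv 2 (Fin n → ℝ)) v) ≠ 0 := fun h => hv0 (hA _ h)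
  have hiff := enorm2_eq_zero (A.mulVec ((WithLp.equiv 2 (Fin n → ℝ)) v))
  rcases (enorm2_nonneg (A.mulVec ((WithLp.equiv 2 (Fin n → ℝ)) v))).lt_or_eq with h | h
  · exact h
  · exact absurd (hiff.mp h.symm) hAv

lemma cheb_abs_le (n : ℕ) (x : ℝ) (hx : x ∈ Set.Icc (-1 : ℝ) 1) : |cheb n x| ≤ 1 := by
  have hc : Real.cos (Real.arccos x) = x := Real.cos_arccos hx.1 hx.2
  have h := Polynomial.Chebyshev.T_real_cos (θ := Real.arccos x) (n := (n : ℤ))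
  rw [hc] at h
  rw [cheb, h]
  exact Real.abs_cos_le_one _

lemma tail_bound (ρ Q : ℝ) (hρ : 1 < ρ) (hQ : 0 < Q) (M : ℕ) (a : ℕ → ℝ)
    (ha : ∀ n : ℕ, 1 ≤ n → |a n| ≤ 2 * Q * ρ ^ (-(n : ℤ)))
    (f : ℝ → ℝ) (x : ℝ) (hx : x ∈ Set.Icc (-1 : ℝ) 1)
    (hf : HasSum (fun n : ℕ => a n * cheb n x) (f x)) :
    |f x - ∑ n ∈ Finset.range (M + 1), a n * cheb n x| ≤ 2 * Q * ρ ^ (-(M : ℤ)) / (ρ - 1) := by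
  have hρ0 : (0 : ℝ) < ρ := lt_trans one_pos hρ
  have hs : HasSum (fun n : ℕ => a (n + (M + 1)) * cheb (n + (M + 1)) x)
      (f x - ∑ n ∈ Finset.range (M + 1), a n * cheb n x) :=
    ((hasSum_nat_add_iff' (M + 1)).mpr hf)
  set u : ℕ → ℝ := fun n => (2 * Q * ρ ^ (-((M : ℤ) + 1))) * (ρ⁻¹) ^ n with hu
  have hbound : ∀ n : ℕ, ‖a (n + (M + 1)) * cheb (n + (M + 1)) x‖ ≤ u n := by
    intro n
    rw [norm_mul]
    have h1 : ‖a (n + (M + 1))‖ ≤ 2 * Q * ρ ^ (-((n : ℤ) + ((M : ℤ) + 1))) := by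
      have h := ha (n + (M + 1)) (by omega)
      rw [Real.norm_eq_abs]
      have hcast : -(((n + (M + 1) : ℕ)) : ℤ) = -((n : ℤ) + ((M : ℤ) + 1)) := by push_cast; ring
      rwa [hcast] at h
    have h2 : ‖cheb (n + (M + 1)) x‖ ≤ 1 := cheb_abs_le _ x hx
    have hzp : ρ ^ (-(n : ℤ)) = ρ⁻¹ ^ n := by
      rw [_root_.zpow_neg, ← _root_.inv_zpow, zpow_natCast]
    calc ‖a (n + (M + 1))‖ * ‖cheb (n + (M + 1)) x‖
        ≤ (2 * Q * ρ ^ (-((n : ℤ) + ((M : ℤ) + 1)))) * 1 := by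
          apply mul_le_mul h1 h2 (norm_nonneg _) (by positivity)
      _ = u n := by
          rw [hu, mul_one]
          rw [show (-((n : ℤ) + ((M : ℤ) + 1))) = (-((M : ℤ) + 1)) + (-(n : ℤ)) by ring,
            zpow_add₀ (ne_of_gt hρ0), hzp]
          ring
  have husum : Summable u := by
    apply Summable.mul_left
    exact summable_geometric_of_lt_one (by positivity) (inv_lt_one_of_one_lt₀ hρ)
  have hgsum : Summable fun n : ℕ => ‖a (n + (M + 1)) * cheb (n + (M + 1)) x‖ :=
    Summable.of_nonneg_of_le (fun n => norm_nonneg _) hbound husum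
  calc |f x - ∑ n ∈ Finset.range (M + 1), a n * cheb n x|
      = ‖∑' n : ℕ, a (n + (M + 1)) * cheb (n + (M + 1)) x‖ := by rw [hs.tsum_eq]; rfl
    _ ≤ ∑' n : ℕ, ‖a (n + (M + 1)) * cheb (n + (M + 1)) x‖ := norm_tsum_le_tsum_norm hgsum
    _ ≤ ∑' n : ℕ, u n := Summable.tsum_le_tsum hbound hgsum husum
    _ = (2 * Q * ρ ^ (-((M : ℤ) + 1))) * (1 - ρ⁻¹)⁻¹ := by
        rw [hu, tsum_mul_left, tsum_geometric_of_lt_one (by positivity) (inv_lt_one_of_one_lt₀ hρ)]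
    _ = 2 * Q * ρ ^ (-(M : ℤ)) / (ρ - 1) := by
        rw [show (-((M : ℤ) + 1)) = (-(M : ℤ)) + (-1) by ring, zpow_add₀ (ne_of_gt hρ0)]
        rw [_root_.zpow_neg_one]
        have h1 : (1 - ρ⁻¹) = (ρ - 1) / ρ := by field_simp
        rw [h1, inv_div]
        have h2 : ρ ≠ 0 := ne_of_gt hρ0
        have h3 : ρ - 1 ≠ 0 := ne_of_gt (sub_pos.mpr hρ)
        field_simp

end Aux

/-- **Theorem 4.1 of the paper, coefficient bound**: if `f(x) = Σ a_n T_n(x)` on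
`[-1,1]` with `|a_0| ≤ Q`, `|a_n| ≤ 2Qρ^{-n}`, and `c` solves the unperturbed normal
equations for degree-`M` least squares fitting at `N+1` equally spaced points, then
`|c_k| ≤ 2Q [ρ^{-k} + (√(N+1)/σ_{M+1}(T_M(x^equi))) ρ^{-M}/(ρ−1)]` for `0 ≤ k ≤ M`. -/
theorem least_squares_coefficient_bound (ρ Q : ℝ) (hρ : 1 < ρ) (hQ : 0 < Q)
    (M N : ℕ) (hMN : M ≤ N) (hN : 1 ≤ N)
    (f : ℝ → ℝ) (a : ℕ → ℝ)
    (hf : ∀ x ∈ Set.Icc (-1 : ℝ) 1, HasSum (fun n : ℕ => a n * cheb n x) (f x))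
    (ha0 : |a 0| ≤ Q)
    (ha : ∀ n : ℕ, 1 ≤ n → |a n| ≤ 2 * Q * ρ ^ (-(n : ℤ)))
    (c : Fin (M + 1) → ℝ)
    (hc : ((chebVand N M).transpose * chebVand N M) *ᵥ c =
      (chebVand N M).transpose *ᵥ (fun i => f (xequi N i))) :
    ∀ k : Fin (M + 1),
      |c k| ≤ 2 * Q * (ρ ^ (-((k : ℕ) : ℤ)) +
        Real.sqrt ((N : ℝ) + 1) / sigmaMin (chebVand N M) * (ρ ^ (-(M : ℤ)) / (ρ - 1))) := by
  intro k
  have hρ0 : (0 : ℝ) < ρ := lt_trans one_pos hρ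
  have hρ1 : (0 : ℝ) < ρ - 1 := sub_pos.mpr hρ
  set A := chebVand N M with hA
  have hgrid : ∀ i : Fin (N + 1), xequi N i ∈ Set.Icc (-1 : ℝ) 1 := by
    intro i
    have hi0 : (0 : ℝ) ≤ (i : ℝ) := Nat.cast_nonneg _
    have hiN : ((i : ℕ) : ℝ) ≤ (N : ℝ) := by exact_mod_cast Nat.le_of_lt_succ i.2
    have hNpos : (0 : ℝ) < (N : ℝ) := by exact_mod_cast hN
    constructor
    · rw [xequi]
      have : 0 ≤ 2 * (i : ℝ) / (N : ℝ) := by positivity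
      linarith
    · rw [xequi]
      have : 2 * (i : ℝ) / (N : ℝ) ≤ 2 := by
        rw [div_le_iff₀ hNpos]; linarith
      linarith
  set D : ℝ := 2 * Q * ρ ^ (-(M : ℤ)) / (ρ - 1) with hD
  have hDpos : 0 < D := by rw [hD]; positivity
  set b : Fin (M + 1) → ℝ := fun j => a (j : ℕ) with hb
  set r : Fin (N + 1) → ℝ := fun i => f (xequi N i) - (A *ᵥ b) i with hr
  have hAb : ∀ i, (A *ᵥ b) i = ∑ n ∈ Finset.range (M + 1), a n * cheb n (xequi N i) := by
    intro i
    rw [← Fin.sum_univ_eq_sum_range (fun n => a n * cheb n (xequi N i)) (M + 1)]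
    simp only [Matrix.mulVec, dotProduct, hA, chebVand, Matrix.of_apply, hb]
    exact Finset.sum_congr rfl (fun j _ => mul_comm _ _)
  have hrb : ∀ i, |r i| ≤ D := by
    intro i
    have h := tail_bound ρ Q hρ hQ M a ha f (xequi N i) (hgrid i) (hf _ (hgrid i))
    rw [hr, hD]
    simpa [hAb i] using h
  have hrnorm : enorm2 r ≤ Real.sqrt ((N : ℝ) + 1) * D := by
    rw [enorm2]
    have hsum : ∑ i, (r i) ^ 2 ≤ ((N : ℝ) + 1) * D ^ 2 := by
      calc ∑ i, (r i) ^ 2 ≤ ∑ _i : Fin (N + 1), D ^ 2 := by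
            refine Finset.sum_le_sum (fun i _ => ?_)
            have := abs_le.mp (hrb i)
            exact sq_le_sq' (by linarith [this.1]) this.2
        _ = ((N : ℝ) + 1) * D ^ 2 := by
            rw [Finset.sum_const, Finset.card_univ, Fintype.card_fin, nsmul_eq_mul]
            push_cast; ring
    calc Real.sqrt (∑ i, (r i) ^ 2) ≤ Real.sqrt (((N : ℝ) + 1) * D ^ 2) := Real.sqrt_le_sqrt hsum
      _ = Real.sqrt ((N : ℝ) + 1) * D := by
          rw [Real.sqrt_mul (by positivity), Real.sqrt_sq hDpos.le]
  set e : Fin (M + 1) → ℝ := c - b with he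
  have hfvec : (fun i => f (xequi N i)) = (A *ᵥ b) + r := by
    funext i
    simp only [Pi.add_apply, hr]
    ring
  have hce : (Aᵀ * A) *ᵥ e = Aᵀ *ᵥ r := by
    rw [he, Matrix.mulVec_sub, hc, hfvec, Matrix.mulVec_add, ← Matrix.mulVec_mulVec]
    abel
  set w := A *ᵥ e with hw
  have hww : w ⬝ᵥ w = w ⬝ᵥ r := by
    have h1 : e ⬝ᵥ ((Aᵀ * A) *ᵥ e) = e ⬝ᵥ (Aᵀ *ᵥ r) := by rw [hce]
    rw [← Matrix.mulVec_mulVec] at h1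
    simp only [Matrix.dotProduct_mulVec, Matrix.vecMul_transpose] at h1
    rw [← Matrix.dotProduct_mulVec] at h1
    rw [← hw] at h1
    exact h1
  have hwsq : ∑ i, (w i) ^ 2 = w ⬝ᵥ w := by
    simp [dotProduct, sq]
  have hCS : w ⬝ᵥ r ≤ enorm2 w * enorm2 r := by
    rw [dotProduct, enorm2, enorm2]
    exact Real.sum_mul_le_sqrt_mul_sqrt _ _ _
  have hw_le : enorm2 w ≤ enorm2 r := by
    rcases (enorm2_nonneg w).eq_or_lt with h0 | h0
    · rw [← h0]; exact enorm2_nonneg r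
    · have hsq : (enorm2 w) ^ 2 = ∑ i, (w i) ^ 2 :=
        Real.sq_sqrt (Finset.sum_nonneg fun i _ => sq_nonneg _)
      have hX : enorm2 w * enorm2 w ≤ enorm2 w * enorm2 r := by
        have h2 : (enorm2 w) ^ 2 ≤ enorm2 w * enorm2 r := by
          rw [hsq, hwsq, hww]; exact hCS
        nlinarith [h2]
      exact le_of_mul_le_mul_left hX h0
  have hσpos : 0 < sigmaMin A := by
    rw [hA]
    exact sigmaMin_pos (Nat.succ_pos M) _ (mulVec_eq_zero N M hMN hN)
  have hσe : sigmaMin A * enorm2 e ≤ enorm2 w := by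
    rcases eq_or_ne e 0 with h0 | h0
    · rw [h0, (enorm2_eq_zero (0 : Fin (M + 1) → ℝ)).mpr rfl, mul_zero]
      exact enorm2_nonneg w
    · have ht : 0 < enorm2 e :=
        (enorm2_nonneg e).lt_of_ne (fun h => h0 ((enorm2_eq_zero e).mp h.symm))
      have hu1 : enorm2 ((enorm2 e)⁻¹ • e) = 1 := by
        rw [enorm2_smul, abs_of_pos (inv_pos.mpr ht)]
        field_simp
      have h1 := sigmaMin_le A _ hu1
      rw [Matrix.mulVec_smul, enorm2_smul, abs_of_pos (inv_pos.mpr ht), ← hw] at h1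
      calc sigmaMin A * enorm2 e ≤ ((enorm2 e)⁻¹ * enorm2 w) * enorm2 e :=
            mul_le_mul_of_nonneg_right h1 ht.le
        _ = enorm2 w := by field_simp
  have he_le : enorm2 e ≤ (sigmaMin A)⁻¹ * (Real.sqrt ((N : ℝ) + 1) * D) := by
    have h2 : sigmaMin A * enorm2 e ≤ Real.sqrt ((N : ℝ) + 1) * D :=
      le_trans hσe (le_trans hw_le hrnorm)
    have h3 : (sigmaMin A)⁻¹ * (sigmaMin A * enorm2 e) = enorm2 e := by
      field_simp
    calc enorm2 e = (sigmaMin A)⁻¹ * (sigmaMin A * enorm2 e) := h3.symm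
      _ ≤ (sigmaMin A)⁻¹ * (Real.sqrt ((N : ℝ) + 1) * D) := by
          exact mul_le_mul_of_nonneg_left h2 (inv_pos.mpr hσpos).le
  have hek : |e k| ≤ enorm2 e := by
    rw [enorm2, ← Real.sqrt_sq_eq_abs]
    apply Real.sqrt_le_sqrt
    exact Finset.single_le_sum (fun i _ => sq_nonneg (e i)) (Finset.mem_univ k)
  have hak : |a (k : ℕ)| ≤ 2 * Q * ρ ^ (-((k : ℕ) : ℤ)) := by
    rcases Nat.eq_zero_or_pos (k : ℕ) with h0 | h0
    · rw [h0]
      simp only [Nat.cast_zero, neg_zero, zpow_zero, mul_one]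
      linarith
    · exact ha _ h0
  have hck : |c k| ≤ |a (k : ℕ)| + |e k| := by
    have hcb : c k = b k + e k := by
      simp [he]
    rw [hcb, hb]
    exact abs_add_le _ _
  calc |c k| ≤ |a (k : ℕ)| + |e k| := hck
    _ ≤ 2 * Q * ρ ^ (-((k : ℕ) : ℤ)) + (sigmaMin A)⁻¹ * (Real.sqrt ((N : ℝ) + 1) * D) := by
        exact add_le_add hak (le_trans hek he_le)
    _ = 2 * Q * (ρ ^ (-((k : ℕ) : ℤ)) +
        Real.sqrt ((N : ℝ) + 1) / sigmaMin (chebVand N M) * (ρ ^ (-(M : ℤ)) / (ρ - 1))) := by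
        rw [hD, ← hA]
        ring
end

section
/- Let M ≤ N be nonnegative integers with N ≥ 1. Let D be the (M+1)×(M+1) diagonal matrix with diagonal entries D_{mm} = N/(2m+1) for 0 ≤ m ≤ M, and let C be the (M+1)×(M+1) matrix with C_{mn} = 1 if m+n is even and C_{mn} = 0 if m+n is odd. Then every eigenvalue λ of the symmetric matrix D + C satisfies (N − M²/2)/(2M+1) ≤ λ ≤ (2N + M + 3)/2. Equivalently, for every v ∈ ℝ^{M+1}, ((N − M²/2)/(2M+1)) ‖v‖₂² ≤ vᵀ(D+C)v ≤ ((2N + M + 3)/2) ‖v‖₂². -/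
open Matrix MeasureTheory
open scoped BigOperators

lemma card_even_le' (n : ℕ) :
    ((Finset.univ : Finset (Fin n)).filter (fun m : Fin n => (m : ℕ) % 2 = 0)).card ≤ (n + 1) / 2 := by
  have h := Finset.card_le_card_of_injOn (fun m : Fin n => (m : ℕ) / 2)
    (s := (Finset.univ : Finset (Fin n)).filter (fun m : Fin n => (m : ℕ) % 2 = 0))
    (t := Finset.range ((n + 1) / 2))
    (by
      intro m hm
      simp only [Finset.coe_filter, Finset.mem_filter, Finset.mem_coe, Finset.mem_univ, true_and, Set.mem_setOf_eq] at hm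
      have := m.isLt
      simp only [Finset.mem_coe, Finset.mem_range]
      omega)
    (by
      intro a ha b hb hab
      simp only [Finset.coe_filter, Finset.mem_univ, true_and, Set.mem_setOf_eq] at ha hb
      have hab' : (a : ℕ) / 2 = (b : ℕ) / 2 := hab
      exact Fin.ext (by omega))
  simpa using h

lemma card_odd_le' (n : ℕ) :
    ((Finset.univ : Finset (Fin n)).filter (fun m : Fin n => (m : ℕ) % 2 = 1)).card ≤ n / 2 := by
  have h := Finset.card_le_card_of_injOn (fun m : Fin n => (m : ℕ) / 2)
    (s := (Finset.univ : Finset (Fin n)).filter (fun m : Fin n => (m : ℕ) % 2 = 1))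
    (t := Finset.range (n / 2))
    (by
      intro m hm
      simp only [Finset.coe_filter, Finset.mem_filter, Finset.mem_coe, Finset.mem_univ, true_and, Set.mem_setOf_eq] at hm
      have := m.isLt
      simp only [Finset.mem_coe, Finset.mem_range]
      omega)
    (by
      intro a ha b hb hab
      simp only [Finset.coe_filter, Finset.mem_univ, true_and, Set.mem_setOf_eq] at ha hb
      have hab' : (a : ℕ) / 2 = (b : ℕ) / 2 := hab
      exact Fin.ext (by omega))
  simpa using h

lemma quad_form_eq (M N : ℕ) (v : Fin (M + 1) → ℝ) :
    v ⬝ᵥ ((Matrix.of fun m n : Fin (M + 1) =>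
        (if m = n then (N : ℝ) / (2 * (m : ℕ) + 1) else 0) +
          (if ((m : ℕ) + (n : ℕ)) % 2 = 0 then (1 : ℝ) else 0)) *ᵥ v)
    = (∑ m : Fin (M+1), (N : ℝ) / (2 * (m : ℕ) + 1) * v m ^ 2)
      + (∑ m : Fin (M+1), if (m : ℕ) % 2 = 0 then v m else 0) ^ 2
      + (∑ m : Fin (M+1), if (m : ℕ) % 2 = 1 then v m else 0) ^ 2 := by
  set E := ∑ m : Fin (M+1), if (m : ℕ) % 2 = 0 then v m else 0 with hE
  set O := ∑ m : Fin (M+1), if (m : ℕ) % 2 = 1 then v m else 0 with hO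
  have hrow : ∀ m : Fin (M + 1),
      ((Matrix.of fun m n : Fin (M + 1) =>
        (if m = n then (N : ℝ) / (2 * (m : ℕ) + 1) else 0) +
          (if ((m : ℕ) + (n : ℕ)) % 2 = 0 then (1 : ℝ) else 0)) *ᵥ v) m
      = (N : ℝ) / (2 * (m : ℕ) + 1) * v m + (if (m : ℕ) % 2 = 0 then E else O) := by
    intro m
    simp only [mulVec, dotProduct, Matrix.of_apply, add_mul]
    rw [Finset.sum_add_distrib]
    congr 1
    · simp [ite_mul]
    · by_cases hm : (m : ℕ) % 2 = 0
      · rw [if_pos hm, hE]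
        apply Finset.sum_congr rfl
        intro n _
        have h2 : (((m : ℕ) + (n : ℕ)) % 2 = 0) ↔ ((n : ℕ) % 2 = 0) := by omega
        simp [h2, ite_mul]
      · rw [if_neg hm, hO]
        apply Finset.sum_congr rfl
        intro n _
        have h2 : (((m : ℕ) + (n : ℕ)) % 2 = 0) ↔ ((n : ℕ) % 2 = 1) := by omega
        simp [h2, ite_mul]
  simp only [dotProduct]
  calc ∑ m, v m * ((Matrix.of fun m n : Fin (M + 1) =>
        (if m = n then (N : ℝ) / (2 * (m : ℕ) + 1) else 0) +
          (if ((m : ℕ) + (n : ℕ)) % 2 = 0 then (1 : ℝ) else 0)) *ᵥ v) m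
      = ∑ m : Fin (M+1), ((N : ℝ) / (2 * (m : ℕ) + 1) * v m ^ 2
          + ((if (m : ℕ) % 2 = 0 then v m else 0) * E
            + (if (m : ℕ) % 2 = 1 then v m else 0) * O)) := by
        apply Finset.sum_congr rfl
        intro m _
        rw [hrow m]
        by_cases hm : (m : ℕ) % 2 = 0
        · have hm1 : ¬ ((m : ℕ) % 2 = 1) := by omega
          simp [hm, hm1]; ring
        · have hm1 : (m : ℕ) % 2 = 1 := by omega
          simp [hm, hm1]; ring
    _ = (∑ m : Fin (M+1), (N : ℝ) / (2 * (m : ℕ) + 1) * v m ^ 2) + E ^ 2 + O ^ 2 := by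
        rw [Finset.sum_add_distrib, Finset.sum_add_distrib, ← Finset.sum_mul, ← Finset.sum_mul,
          ← hE, ← hO]
        ring

lemma quad_bounds (M N : ℕ) (hMN : M ≤ N) (hN : 1 ≤ N) (v : Fin (M + 1) → ℝ) :
    ((N : ℝ) - (M : ℝ) ^ 2 / 2) / (2 * (M : ℝ) + 1) * (∑ i, v i ^ 2) ≤
        v ⬝ᵥ ((Matrix.of fun m n : Fin (M + 1) =>
          (if m = n then (N : ℝ) / (2 * (m : ℕ) + 1) else 0) +
            (if ((m : ℕ) + (n : ℕ)) % 2 = 0 then (1 : ℝ) else 0)) *ᵥ v) ∧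
      v ⬝ᵥ ((Matrix.of fun m n : Fin (M + 1) =>
          (if m = n then (N : ℝ) / (2 * (m : ℕ) + 1) else 0) +
            (if ((m : ℕ) + (n : ℕ)) % 2 = 0 then (1 : ℝ) else 0)) *ᵥ v) ≤
        (2 * (N : ℝ) + (M : ℝ) + 3) / 2 * (∑ i, v i ^ 2) := by
  rw [quad_form_eq]
  set S := ∑ i, v i ^ 2 with hSdef
  have hS : 0 ≤ S := by positivity
  set E := ∑ m : Fin (M+1), if (m : ℕ) % 2 = 0 then v m else 0 with hE
  set O := ∑ m : Fin (M+1), if (m : ℕ) % 2 = 1 then v m else 0 with hO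
  have hdl : (N : ℝ) / (2 * (M : ℝ) + 1) * S ≤
      ∑ m : Fin (M+1), (N : ℝ) / (2 * (m : ℕ) + 1) * v m ^ 2 := by
    rw [hSdef, Finset.mul_sum]
    apply Finset.sum_le_sum
    intro m _
    have hm : ((m : ℕ) : ℝ) ≤ (M : ℝ) := by exact_mod_cast Nat.lt_succ_iff.mp m.isLt
    have hdiv : (N : ℝ) / (2 * (M : ℝ) + 1) ≤ (N : ℝ) / (2 * (m : ℕ) + 1) := by
      gcongr
      all_goals first | positivity | linarith
    nlinarith [sq_nonneg (v m)]
  constructor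
  · have h0 : ((N : ℝ) - (M : ℝ) ^ 2 / 2) / (2 * (M : ℝ) + 1) ≤ (N : ℝ) / (2 * (M : ℝ) + 1) := by
      gcongr
      all_goals first | positivity | nlinarith [sq_nonneg (M : ℝ)]
    have h0S := mul_le_mul_of_nonneg_right h0 hS
    nlinarith [sq_nonneg E, sq_nonneg O]
  · have hdu : (∑ m : Fin (M+1), (N : ℝ) / (2 * (m : ℕ) + 1) * v m ^ 2) ≤ (N : ℝ) * S := by
      rw [hSdef, Finset.mul_sum]
      apply Finset.sum_le_sum
      intro m _
      have hmn : (0 : ℝ) ≤ (m : ℕ) := Nat.cast_nonneg _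
      have hd : (N : ℝ) / (2 * (m : ℕ) + 1) ≤ (N : ℝ) :=
        div_le_self (Nat.cast_nonneg _) (by linarith)
      nlinarith [sq_nonneg (v m)]
    set se := Finset.univ.filter (fun m : Fin (M+1) => (m : ℕ) % 2 = 0) with hse
    set so := Finset.univ.filter (fun m : Fin (M+1) => (m : ℕ) % 2 = 1) with hso
    have hEeq : E = ∑ m ∈ se, v m := by rw [hE, hse, Finset.sum_filter]
    have hOeq : O = ∑ m ∈ so, v m := by rw [hO, hso, Finset.sum_filter]
    have hCe := sq_sum_le_card_mul_sum_sq (s := se) (f := v)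
    have hCo := sq_sum_le_card_mul_sum_sq (s := so) (f := v)
    have hcard_e : (se.card : ℝ) ≤ ((M : ℝ) + 3) / 2 := by
      have h2 : 2 * se.card ≤ M + 3 := by
        rw [hse]
        have := card_even_le' (M + 1)
        omega
      have := (Nat.cast_le (α := ℝ)).mpr h2
      push_cast at this
      linarith
    have hcard_o : (so.card : ℝ) ≤ ((M : ℝ) + 3) / 2 := by
      have h2 : 2 * so.card ≤ M + 3 := by
        rw [hso]
        have := card_odd_le' (M + 1)
        omega
      have := (Nat.cast_le (α := ℝ)).mpr h2
      push_cast at this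
      linarith
    have hsplit : (∑ m ∈ se, v m ^ 2) + (∑ m ∈ so, v m ^ 2) = S := by
      rw [hSdef, ← Finset.sum_filter_add_sum_filter_not Finset.univ
        (fun m : Fin (M+1) => (m : ℕ) % 2 = 0) (fun m => v m ^ 2)]
      congr 1
      apply Finset.sum_congr _ (fun _ _ => rfl)
      apply Finset.filter_congr
      intro m _
      omega
    have hne : (0 : ℝ) ≤ ∑ m ∈ se, v m ^ 2 := Finset.sum_nonneg fun m _ => sq_nonneg _
    have hno : (0 : ℝ) ≤ ∑ m ∈ so, v m ^ 2 := Finset.sum_nonneg fun m _ => sq_nonneg _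
    have hE2 : E ^ 2 ≤ ((M : ℝ) + 3) / 2 * (∑ m ∈ se, v m ^ 2) := by
      rw [hEeq]
      calc (∑ m ∈ se, v m) ^ 2 ≤ (se.card : ℝ) * ∑ m ∈ se, v m ^ 2 := by exact_mod_cast hCe
        _ ≤ ((M : ℝ) + 3) / 2 * (∑ m ∈ se, v m ^ 2) :=
          mul_le_mul_of_nonneg_right hcard_e hne
    have hO2 : O ^ 2 ≤ ((M : ℝ) + 3) / 2 * (∑ m ∈ so, v m ^ 2) := by
      rw [hOeq]
      calc (∑ m ∈ so, v m) ^ 2 ≤ (so.card : ℝ) * ∑ m ∈ so, v m ^ 2 := by exact_mod_cast hCo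
        _ ≤ ((M : ℝ) + 3) / 2 * (∑ m ∈ so, v m ^ 2) :=
          mul_le_mul_of_nonneg_right hcard_o hno
    nlinarith [hdu, hE2, hO2, hsplit]

/-- **Lemma A.2 of the paper**: with `D = diag(N/(2m+1))_{m=0}^M` and
`C_{mn} = 1` if `m+n` even, `0` otherwise, every eigenvalue `λ` of the symmetric
matrix `D + C` satisfies `(N − M²/2)/(2M+1) ≤ λ ≤ (2N+M+3)/2`; equivalently the
quadratic form `vᵀ(D+C)v` is pinched between these multiples of `‖v‖₂²`. -/
theorem legendre_gram_eigenvalue_bounds (M N : ℕ) (hMN : M ≤ N) (hN : 1 ≤ N) :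
    (∀ (lam : ℝ) (v : Fin (M + 1) → ℝ), v ≠ 0 →
      (Matrix.of fun m n : Fin (M + 1) =>
          (if m = n then (N : ℝ) / (2 * (m : ℕ) + 1) else 0) +
            (if ((m : ℕ) + (n : ℕ)) % 2 = 0 then (1 : ℝ) else 0)) *ᵥ v = lam • v →
      ((N : ℝ) - (M : ℝ) ^ 2 / 2) / (2 * (M : ℝ) + 1) ≤ lam ∧
        lam ≤ (2 * (N : ℝ) + (M : ℝ) + 3) / 2) ∧
    ∀ v : Fin (M + 1) → ℝ,
      ((N : ℝ) - (M : ℝ) ^ 2 / 2) / (2 * (M : ℝ) + 1) * (∑ i, v i ^ 2) ≤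
        v ⬝ᵥ ((Matrix.of fun m n : Fin (M + 1) =>
          (if m = n then (N : ℝ) / (2 * (m : ℕ) + 1) else 0) +
            (if ((m : ℕ) + (n : ℕ)) % 2 = 0 then (1 : ℝ) else 0)) *ᵥ v) ∧
      v ⬝ᵥ ((Matrix.of fun m n : Fin (M + 1) =>
          (if m = n then (N : ℝ) / (2 * (m : ℕ) + 1) else 0) +
            (if ((m : ℕ) + (n : ℕ)) % 2 = 0 then (1 : ℝ) else 0)) *ᵥ v) ≤
        (2 * (N : ℝ) + (M : ℝ) + 3) / 2 * (∑ i, v i ^ 2) := by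
  refine ⟨?_, fun v => quad_bounds M N hMN hN v⟩
  intro lam v hv heig
  have hq := quad_bounds M N hMN hN v
  have hdot : v ⬝ᵥ ((Matrix.of fun m n : Fin (M + 1) =>
      (if m = n then (N : ℝ) / (2 * (m : ℕ) + 1) else 0) +
        (if ((m : ℕ) + (n : ℕ)) % 2 = 0 then (1 : ℝ) else 0)) *ᵥ v)
      = lam * ∑ i, v i ^ 2 := by
    rw [heig]
    simp only [dotProduct, Pi.smul_apply, smul_eq_mul, Finset.mul_sum]
    apply Finset.sum_congr rfl
    intro i _
    ring
  rw [hdot] at hq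
  have hS : 0 < ∑ i, v i ^ 2 := by
    obtain ⟨i, hi⟩ := Function.ne_iff.mp hv
    exact Finset.sum_pos' (fun j _ => sq_nonneg _) ⟨i, Finset.mem_univ i, sq_pos_of_ne_zero hi⟩
  exact ⟨le_of_mul_le_mul_right hq.1 hS, le_of_mul_le_mul_right hq.2 hS⟩
end

section
/- Let M ≤ N be nonnegative integers with N ≥ 1. Let F be the (M+1)×(M+1) matrix with F_{mn} = (N/2) ∫_{-1}^1 T_m(x) T_n(x) dx, i.e., F_{mn} = (N/2)[1/(1−(m+n)²) + 1/(1−(m−n)²)] when m+n is even and F_{mn} = 0 when m+n is odd, and let C be the (M+1)×(M+1) matrix with C_{mn} = 1 if m+n is even and C_{mn} = 0 otherwise. Then the largest eigenvalue of the symmetric matrix F + C satisfies λ₁(F + C) ≤ (4N + M + 1)/2; equivalently, vᵀ(F+C)v ≤ ((4N+M+1)/2) ‖v‖₂² for every v ∈ ℝ^{M+1}. -/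
open Matrix MeasureTheory
open scoped BigOperators

noncomputable def hh (j : ℕ) : ℝ := if j % 2 = 0 ∧ 2 ≤ j then ((j : ℝ) ^ 2 - 1)⁻¹ else 0

lemma hh_nonneg (j : ℕ) : 0 ≤ hh j := by
  unfold hh
  split
  · rename_i h
    have : (2:ℝ) ≤ (j:ℝ) := by exact_mod_cast h.2
    have : (0:ℝ) < (j:ℝ)^2 - 1 := by nlinarith
    positivity
  · exact le_refl _

lemma sum_hh_odd (k : ℕ) :
    ∑ j ∈ Finset.range (2*k+1), hh j = 1/2 - 1/(2*(2*(k:ℝ)+1)) := by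
  induction k with
  | zero =>
    simp [hh]
  | succ k ih =>
    have h1 : 2*(k+1)+1 = (2*k+1) + 1 + 1 := by ring
    rw [h1, Finset.sum_range_succ, Finset.sum_range_succ, ih]
    have hodd : hh (2*k+1) = 0 := by
      unfold hh; rw [if_neg]; omega
    have heven : hh (2*k+1+1) = (((2*k+2:ℕ):ℝ)^2 - 1)⁻¹ := by
      unfold hh; rw [if_pos]; · norm_num; · omega
    rw [hodd, heven]
    push_cast
    have h2 : ((2:ℝ)*k+2)^2 - 1 ≠ 0 := by nlinarith [Nat.cast_nonneg (α := ℝ) k]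
    have h3 : (2:ℝ)*(2*(k:ℝ)+1) ≠ 0 := by nlinarith [Nat.cast_nonneg (α := ℝ) k]
    have h4 : (2:ℝ)*(2*((k:ℝ)+1)+1) ≠ 0 := by nlinarith [Nat.cast_nonneg (α := ℝ) k]
    field_simp
    ring_nf
    field_simp
    ring

lemma sum_hh_le (L : ℕ) : ∑ j ∈ Finset.range L, hh j ≤ 1/2 := by
  have hsub : ∑ j ∈ Finset.range L, hh j ≤ ∑ j ∈ Finset.range (2*L+1), hh j := by
    apply Finset.sum_le_sum_of_subset_of_nonneg
    · exact Finset.range_subset_range.2 (by omega)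
    · intro i _ _; exact hh_nonneg i
  rw [sum_hh_odd] at hsub
  have : 0 < 1/(2*(2*(L:ℝ)+1)) := by positivity
  linarith

lemma sum_hh_shift (m K : ℕ) : ∑ n ∈ Finset.range K, hh (m + n) ≤ 1/2 := by
  have h : ∑ i ∈ Finset.Ico m (m + K), hh i = ∑ i ∈ Finset.range (m + K - m), hh (m + i) :=
    Finset.sum_Ico_eq_sum_range hh m (m + K)
  rw [Nat.add_sub_cancel_left] at h
  rw [← h]
  calc ∑ i ∈ Finset.Ico m (m + K), hh i
      ≤ ∑ i ∈ Finset.range (m + K), hh i := by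
        apply Finset.sum_le_sum_of_subset_of_nonneg
        · intro x hx; rw [Finset.mem_Ico] at hx; exact Finset.mem_range.2 hx.2
        · intro i _ _; exact hh_nonneg i
    _ ≤ 1/2 := sum_hh_le _

lemma sum_hh_sub (m : ℕ) : ∑ n ∈ Finset.range m, hh (m - n) ≤ 1/2 := by
  have h := Finset.sum_range_reflect (fun n => hh (m - n)) m
  -- h : ∑ j in range m, hh (m - (m - 1 - j)) = ∑ j in range m, hh (m - j)
  rw [← h]
  have : ∀ j ∈ Finset.range m, hh (m - (m - 1 - j)) = hh (1 + j) := by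
    intro j hj
    rw [Finset.mem_range] at hj
    congr 1
    omega
  rw [Finset.sum_congr rfl this]
  exact sum_hh_shift 1 m

lemma cast_sub_sq (m n : ℕ) : ((m:ℝ) - (n:ℝ))^2 = ((Nat.dist m n : ℕ) : ℝ)^2 := by
  rcases le_total m n with h | h
  · rw [Nat.dist_eq_sub_of_le h]
    push_cast [h]
    ring
  · rw [Nat.dist_eq_sub_of_le_right h]
    push_cast [h]
    ring

lemma dist_parity (m n : ℕ) : Nat.dist m n % 2 = (m + n) % 2 := by
  simp [Nat.dist]
  omega

lemma sub_term_eq (m n : ℕ) :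
    (if (m + n) % 2 = 0 then |1 / (1 - ((m:ℝ) - (n:ℝ))^2)| else 0)
      = (if n = m then (1:ℝ) else 0) + hh (Nat.dist m n) := by
  by_cases hnm : n = m
  · subst hnm
    have hpar : (n + n) % 2 = 0 := by omega
    rw [if_pos hpar, if_pos rfl]
    have h0 : hh (Nat.dist n n) = 0 := by simp [Nat.dist_self, hh]
    rw [h0, sub_self]
    norm_num
  · rw [if_neg hnm, zero_add]
    have hd : 1 ≤ Nat.dist m n := by
      have := Nat.dist_eq_zero (n := m) (m := n)
      rcases Nat.eq_zero_or_pos (Nat.dist m n) with h | h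
      · exact absurd (Nat.eq_of_dist_eq_zero h) (fun e => hnm e.symm)
      · exact h
    by_cases hpar : (m + n) % 2 = 0
    · rw [if_pos hpar]
      have hd2 : 2 ≤ Nat.dist m n := by
        have := dist_parity m n
        omega
      have hdr : (2:ℝ) ≤ ((Nat.dist m n : ℕ) : ℝ) := by exact_mod_cast hd2
      unfold hh
      rw [if_pos ⟨by rw [dist_parity]; exact hpar, hd2⟩]
      rw [cast_sub_sq]
      rw [abs_of_neg (one_div_neg.mpr (by nlinarith)), one_div, neg_inv, neg_sub]
    · rw [if_neg hpar]
      unfold hh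
      rw [if_neg]
      rw [dist_parity]
      omega

lemma key_sub (m M : ℕ) (hm : m ≤ M) :
    ∑ n ∈ Finset.range (M+1), (if (m + n) % 2 = 0 then |1 / (1 - ((m:ℝ) - (n:ℝ))^2)| else 0)
      ≤ 2 := by
  rw [Finset.sum_congr rfl (fun n _ => sub_term_eq m n)]
  rw [Finset.sum_add_distrib]
  have h1 : ∑ n ∈ Finset.range (M+1), (if n = m then (1:ℝ) else 0) = 1 := by
    rw [Finset.sum_ite_eq' (Finset.range (M+1)) m (fun _ => (1:ℝ))]
    rw [if_pos (Finset.mem_range.2 (by omega))]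
  have h2 : ∑ n ∈ Finset.range (M+1), hh (Nat.dist m n) ≤ 1 := by
    rw [Finset.range_eq_Ico, ← Finset.sum_Ico_consecutive _ (Nat.zero_le m) (by omega : m ≤ M+1)]
    have hA : ∑ n ∈ Finset.Ico 0 m, hh (Nat.dist m n) ≤ 1/2 := by
      rw [← Finset.range_eq_Ico]
      have : ∀ n ∈ Finset.range m, hh (Nat.dist m n) = hh (m - n) := by
        intro n hn
        rw [Finset.mem_range] at hn
        rw [Nat.dist_eq_sub_of_le_right (le_of_lt hn)]
      rw [Finset.sum_congr rfl this]
      exact sum_hh_sub m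
    have hB : ∑ n ∈ Finset.Ico m (M+1), hh (Nat.dist m n) ≤ 1/2 := by
      rw [Finset.sum_Ico_eq_sum_range (fun n => hh (Nat.dist m n)) m (M+1)]
      have : ∀ i ∈ Finset.range (M+1-m), hh (Nat.dist m (m + i)) = hh i := by
        intro i _
        congr 1
        simp [Nat.dist]
      rw [Finset.sum_congr rfl this]
      exact sum_hh_le _
    linarith
  linarith

lemma add_term_eq (m n : ℕ) (hm : 1 ≤ m) :
    (if (m + n) % 2 = 0 then |1 / (1 - ((m:ℝ) + (n:ℝ))^2)| else 0) = hh (m + n) := by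
  by_cases hpar : (m + n) % 2 = 0
  · rw [if_pos hpar]
    have h2 : 2 ≤ m + n := by omega
    have hdr : (2:ℝ) ≤ ((m + n : ℕ) : ℝ) := by exact_mod_cast h2
    unfold hh
    rw [if_pos ⟨hpar, h2⟩]
    have : (m:ℝ) + (n:ℝ) = ((m + n : ℕ) : ℝ) := by push_cast; ring
    rw [this, abs_of_neg (one_div_neg.mpr (by nlinarith)), one_div, neg_inv, neg_sub]
  · rw [if_neg hpar]
    unfold hh
    rw [if_neg]
    omega

lemma key_add (m M : ℕ) (hm : 1 ≤ m) :
    ∑ n ∈ Finset.range (M+1), (if (m + n) % 2 = 0 then |1 / (1 - ((m:ℝ) + (n:ℝ))^2)| else 0)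
      ≤ 1/2 := by
  rw [Finset.sum_congr rfl (fun n _ => add_term_eq m n hm)]
  exact sum_hh_shift m (M+1)

lemma key_sub_zero (M : ℕ) :
    ∑ n ∈ Finset.range (M+1), (if (0 + n) % 2 = 0 then |1 / (1 - (((0:ℕ):ℝ) - (n:ℝ))^2)| else 0)
      ≤ 3/2 := by
  rw [Finset.sum_congr rfl (fun n _ => sub_term_eq 0 n)]
  rw [Finset.sum_add_distrib]
  have h1 : ∑ n ∈ Finset.range (M+1), (if n = 0 then (1:ℝ) else 0) = 1 := by
    rw [Finset.sum_ite_eq' (Finset.range (M+1)) 0 (fun _ => (1:ℝ))]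
    rw [if_pos (Finset.mem_range.2 (by omega))]
  have h2 : ∑ n ∈ Finset.range (M+1), hh (Nat.dist 0 n) ≤ 1/2 := by
    have : ∀ n ∈ Finset.range (M+1), hh (Nat.dist 0 n) = hh (0 + n) := by
      intro n _
      congr 1
      simp [Nat.dist]
    rw [Finset.sum_congr rfl this]
    exact sum_hh_shift 0 (M+1)
  linarith

lemma key_combined (m M : ℕ) (hm : m ≤ M) :
    ∑ n ∈ Finset.range (M+1),
      (if (m + n) % 2 = 0 then
        |1 / (1 - ((m:ℝ) + (n:ℝ))^2)| + |1 / (1 - ((m:ℝ) - (n:ℝ))^2)| else 0) ≤ 3 := by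
  have hsplit : ∀ n, (if (m + n) % 2 = 0 then
        |1 / (1 - ((m:ℝ) + (n:ℝ))^2)| + |1 / (1 - ((m:ℝ) - (n:ℝ))^2)| else 0)
      = (if (m + n) % 2 = 0 then |1 / (1 - ((m:ℝ) + (n:ℝ))^2)| else 0)
        + (if (m + n) % 2 = 0 then |1 / (1 - ((m:ℝ) - (n:ℝ))^2)| else 0) := by
    intro n; split <;> simp
  rw [Finset.sum_congr rfl (fun n _ => hsplit n), Finset.sum_add_distrib]
  rcases Nat.eq_zero_or_pos m with hm0 | hm1
  · subst hm0
    have heq : ∀ n ∈ Finset.range (M+1),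
        (if (0 + n) % 2 = 0 then |1 / (1 - (((0:ℕ):ℝ) + (n:ℝ))^2)| else 0)
          = (if (0 + n) % 2 = 0 then |1 / (1 - (((0:ℕ):ℝ) - (n:ℝ))^2)| else 0) := by
      intro n _
      have : (((0:ℕ):ℝ) + (n:ℝ))^2 = (((0:ℕ):ℝ) - (n:ℝ))^2 := by push_cast; ring
      rw [this]
    rw [Finset.sum_congr rfl heq]
    have := key_sub_zero M
    linarith
  · have hA := key_add m M hm1
    have hB := key_sub m M hm
    linarith

lemma count_par (m M : ℕ) :
    ∑ n ∈ Finset.range (M+1), (if (m + n) % 2 = 0 then (1:ℝ) else 0) ≤ ((M:ℝ) + 2)/2 := by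
  have point : ∀ n, (if (m + n) % 2 = 0 then (1:ℝ) else 0) = (1 + (-1:ℝ)^m * (-1:ℝ)^n)/2 := by
    intro n
    rw [← pow_add]
    rcases Nat.even_or_odd (m + n) with h | h
    · rw [if_pos (Nat.even_iff.1 h), h.neg_one_pow]; norm_num
    · rw [if_neg (by rw [Nat.odd_iff] at h; omega), h.neg_one_pow]
      norm_num
  rw [Finset.sum_congr rfl (fun n _ => point n)]
  have hS : ∑ n ∈ Finset.range (M+1), (-1:ℝ)^n = 0 ∨ ∑ n ∈ Finset.range (M+1), (-1:ℝ)^n = 1 := by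
    rw [geom_sum_eq (by norm_num : (-1:ℝ) ≠ 1)]
    rcases Nat.even_or_odd (M+1) with h | h
    · left; rw [h.neg_one_pow]; norm_num
    · right; rw [h.neg_one_pow]; norm_num
  have hsum : ∑ n ∈ Finset.range (M+1), (1 + (-1:ℝ)^m * (-1:ℝ)^n)/2
      = (((M:ℝ)+1) + (-1:ℝ)^m * ∑ n ∈ Finset.range (M+1), (-1:ℝ)^n)/2 := by
    rw [← Finset.sum_div, Finset.sum_add_distrib, ← Finset.mul_sum, Finset.sum_const,
      Finset.card_range]
    push_cast
    ring
  rw [hsum]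
  have hm1 : (-1:ℝ)^m = 1 ∨ (-1:ℝ)^m = -1 := by
    rcases Nat.even_or_odd m with h | h
    · left; exact h.neg_one_pow
    · right; exact h.neg_one_pow
  rcases hS with h | h <;> rcases hm1 with h2 | h2 <;> rw [h, h2] <;> ring_nf <;> linarith

noncomputable def entryFC (N m n : ℕ) : ℝ :=
  (if (m + n) % 2 = 0 then
      (N : ℝ) / 2 * (1 / (1 - ((m : ℝ) + (n : ℝ)) ^ 2) + 1 / (1 - ((m : ℝ) - (n : ℝ)) ^ 2))
    else 0) + (if (m + n) % 2 = 0 then (1 : ℝ) else 0)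

lemma entryFC_symm (N m n : ℕ) : entryFC N m n = entryFC N n m := by
  unfold entryFC
  have hp : (n + m) % 2 = (m + n) % 2 := by omega
  rw [hp]
  split
  · have h1 : ((n:ℝ) + (m:ℝ))^2 = ((m:ℝ) + (n:ℝ))^2 := by ring
    have h2 : ((n:ℝ) - (m:ℝ))^2 = ((m:ℝ) - (n:ℝ))^2 := by ring
    rw [h1, h2]
  · rfl

lemma entryFC_abs_le (N m n : ℕ) :
    |entryFC N m n| ≤ (if (m + n) % 2 = 0 then (1:ℝ) else 0)
      + (N:ℝ)/2 * (if (m + n) % 2 = 0 then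
          |1 / (1 - ((m:ℝ) + (n:ℝ))^2)| + |1 / (1 - ((m:ℝ) - (n:ℝ))^2)| else 0) := by
  unfold entryFC
  split
  · calc |(N:ℝ)/2 * (1 / (1 - ((m:ℝ) + (n:ℝ))^2) + 1 / (1 - ((m:ℝ) - (n:ℝ))^2)) + 1|
        ≤ |(N:ℝ)/2 * (1 / (1 - ((m:ℝ) + (n:ℝ))^2) + 1 / (1 - ((m:ℝ) - (n:ℝ))^2))| + |(1:ℝ)| :=
          abs_add_le _ _
      _ ≤ 1 + (N:ℝ)/2 * (|1 / (1 - ((m:ℝ) + (n:ℝ))^2)| + |1 / (1 - ((m:ℝ) - (n:ℝ))^2)|) := by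
          rw [abs_mul, abs_of_nonneg (by positivity : (0:ℝ) ≤ (N:ℝ)/2), abs_one]
          have := abs_add_le (1 / (1 - ((m:ℝ) + (n:ℝ))^2)) (1 / (1 - ((m:ℝ) - (n:ℝ))^2))
          nlinarith [Nat.cast_nonneg (α := ℝ) N]
  · simp

lemma row_bound (M N : ℕ) (hN : 1 ≤ N) (m : ℕ) (hm : m ≤ M) :
    ∑ n ∈ Finset.range (M+1), |entryFC N m n| ≤ (4*(N:ℝ) + (M:ℝ) + 1)/2 := by
  have h1 : ∑ n ∈ Finset.range (M+1), |entryFC N m n|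
      ≤ ∑ n ∈ Finset.range (M+1), ((if (m + n) % 2 = 0 then (1:ℝ) else 0)
        + (N:ℝ)/2 * (if (m + n) % 2 = 0 then
            |1 / (1 - ((m:ℝ) + (n:ℝ))^2)| + |1 / (1 - ((m:ℝ) - (n:ℝ))^2)| else 0)) :=
    Finset.sum_le_sum (fun n _ => entryFC_abs_le N m n)
  rw [Finset.sum_add_distrib, ← Finset.mul_sum] at h1
  have h2 := count_par m M
  have h3 := key_combined m M hm
  have hN' : (1:ℝ) ≤ (N:ℝ) := by exact_mod_cast hN
  have h4 : (N:ℝ)/2 * (∑ n ∈ Finset.range (M+1), (if (m + n) % 2 = 0 then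
      |1 / (1 - ((m:ℝ) + (n:ℝ))^2)| + |1 / (1 - ((m:ℝ) - (n:ℝ))^2)| else 0)) ≤ (N:ℝ)/2 * 3 := by
    apply mul_le_mul_of_nonneg_left h3 (by positivity)
  linarith

lemma quad_bound (M N : ℕ) (hN : 1 ≤ N) (v : Fin (M+1) → ℝ) :
    v ⬝ᵥ ((Matrix.of fun m n : Fin (M + 1) => entryFC N (m : ℕ) (n : ℕ)) *ᵥ v)
      ≤ (4*(N:ℝ) + (M:ℝ) + 1)/2 * ∑ i, v i ^ 2 := by
  set B := (4*(N:ℝ) + (M:ℝ) + 1)/2 with hB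
  have hRow : ∀ m : Fin (M+1), ∑ n : Fin (M+1), |entryFC N (m:ℕ) (n:ℕ)| ≤ B := by
    intro m
    rw [Fin.sum_univ_eq_sum_range (fun n => |entryFC N (m:ℕ) n|) (M+1)]
    exact row_bound M N hN m (Nat.lt_succ_iff.mp m.isLt)
  have step1 : v ⬝ᵥ ((Matrix.of fun m n : Fin (M + 1) => entryFC N (m:ℕ) (n:ℕ)) *ᵥ v)
      = ∑ m : Fin (M+1), ∑ n : Fin (M+1), v m * (entryFC N (m:ℕ) (n:ℕ) * v n) := by
    simp [dotProduct, Matrix.mulVec, Finset.mul_sum]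
  rw [step1]
  have step2 : ∑ m : Fin (M+1), ∑ n : Fin (M+1), v m * (entryFC N (m:ℕ) (n:ℕ) * v n)
      ≤ ∑ m : Fin (M+1), ∑ n : Fin (M+1),
          (|entryFC N (m:ℕ) (n:ℕ)| * (v m)^2/2 + |entryFC N (m:ℕ) (n:ℕ)| * (v n)^2/2) := by
    apply Finset.sum_le_sum; intro m _
    apply Finset.sum_le_sum; intro n _
    have h2 : |v m * (entryFC N (m:ℕ) (n:ℕ) * v n)|
        = |entryFC N (m:ℕ) (n:ℕ)| * (|v m| * |v n|) := by
      rw [abs_mul, abs_mul]; ring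
    have h3 : |v m| * |v n| ≤ ((v m)^2 + (v n)^2)/2 := by
      nlinarith [sq_nonneg (|v m| - |v n|), sq_abs (v m), sq_abs (v n)]
    calc v m * (entryFC N (m:ℕ) (n:ℕ) * v n)
        ≤ |entryFC N (m:ℕ) (n:ℕ)| * (|v m| * |v n|) := by rw [← h2]; exact le_abs_self _
      _ ≤ |entryFC N (m:ℕ) (n:ℕ)| * (((v m)^2 + (v n)^2)/2) :=
          mul_le_mul_of_nonneg_left h3 (abs_nonneg _)
      _ = |entryFC N (m:ℕ) (n:ℕ)| * (v m)^2/2 + |entryFC N (m:ℕ) (n:ℕ)| * (v n)^2/2 := by ring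
  have step3 : ∑ m : Fin (M+1), ∑ n : Fin (M+1),
      (|entryFC N (m:ℕ) (n:ℕ)| * (v m)^2/2 + |entryFC N (m:ℕ) (n:ℕ)| * (v n)^2/2)
      = ∑ m : Fin (M+1), (v m)^2 * ∑ n : Fin (M+1), |entryFC N (m:ℕ) (n:ℕ)| := by
    rw [Finset.sum_congr rfl (fun m _ => Finset.sum_add_distrib), Finset.sum_add_distrib]
    have hfirst : ∑ m : Fin (M+1), ∑ n : Fin (M+1), |entryFC N (m:ℕ) (n:ℕ)| * (v m)^2/2
        = ∑ m : Fin (M+1), (v m)^2/2 * ∑ n : Fin (M+1), |entryFC N (m:ℕ) (n:ℕ)| := by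
      apply Finset.sum_congr rfl; intro m _
      rw [Finset.mul_sum]
      apply Finset.sum_congr rfl; intro n _
      ring
    have hsecond : ∑ m : Fin (M+1), ∑ n : Fin (M+1), |entryFC N (m:ℕ) (n:ℕ)| * (v n)^2/2
        = ∑ m : Fin (M+1), (v m)^2/2 * ∑ n : Fin (M+1), |entryFC N (m:ℕ) (n:ℕ)| := by
      rw [Finset.sum_comm]
      apply Finset.sum_congr rfl; intro n _
      rw [Finset.mul_sum]
      apply Finset.sum_congr rfl; intro m _
      rw [entryFC_symm]
      ring
    rw [hfirst, hsecond, ← Finset.sum_add_distrib]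
    apply Finset.sum_congr rfl; intro m _
    ring
  have step4 : ∑ m : Fin (M+1), (v m)^2 * ∑ n : Fin (M+1), |entryFC N (m:ℕ) (n:ℕ)|
      ≤ B * ∑ i, v i ^ 2 := by
    calc ∑ m : Fin (M+1), (v m)^2 * ∑ n : Fin (M+1), |entryFC N (m:ℕ) (n:ℕ)|
        ≤ ∑ m : Fin (M+1), (v m)^2 * B :=
          Finset.sum_le_sum (fun m _ => mul_le_mul_of_nonneg_left (hRow m) (sq_nonneg _))
      _ = B * ∑ i, v i ^ 2 := by rw [← Finset.sum_mul]; ring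
  exact step2.trans (step3.trans_le step4)

/-- **Lemma A.3 of the paper**: with
`F_{mn} = (N/2)[1/(1−(m+n)²) + 1/(1−(m−n)²)]` when `m+n` is even and `0` otherwise,
and `C_{mn} = 1` if `m+n` even, `0` otherwise, the largest eigenvalue of the
symmetric matrix `F + C` is at most `(4N+M+1)/2`; equivalently
`vᵀ(F+C)v ≤ ((4N+M+1)/2) ‖v‖₂²` for every `v`. -/
theorem chebyshev_gram_eigenvalue_bound (M N : ℕ) (hMN : M ≤ N) (hN : 1 ≤ N) :
    (∀ (lam : ℝ) (v : Fin (M + 1) → ℝ), v ≠ 0 →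
      (Matrix.of fun m n : Fin (M + 1) =>
          (if ((m : ℕ) + (n : ℕ)) % 2 = 0 then
            (N : ℝ) / 2 * (1 / (1 - ((m : ℝ) + (n : ℝ)) ^ 2) +
              1 / (1 - ((m : ℝ) - (n : ℝ)) ^ 2)) else 0) +
            (if ((m : ℕ) + (n : ℕ)) % 2 = 0 then (1 : ℝ) else 0)) *ᵥ v = lam • v →
      lam ≤ (4 * (N : ℝ) + (M : ℝ) + 1) / 2) ∧
    ∀ v : Fin (M + 1) → ℝ,
      v ⬝ᵥ ((Matrix.of fun m n : Fin (M + 1) =>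
          (if ((m : ℕ) + (n : ℕ)) % 2 = 0 then
            (N : ℝ) / 2 * (1 / (1 - ((m : ℝ) + (n : ℝ)) ^ 2) +
              1 / (1 - ((m : ℝ) - (n : ℝ)) ^ 2)) else 0) +
            (if ((m : ℕ) + (n : ℕ)) % 2 = 0 then (1 : ℝ) else 0)) *ᵥ v) ≤
        (4 * (N : ℝ) + (M : ℝ) + 1) / 2 * (∑ i, v i ^ 2) := by
  have key : ∀ v : Fin (M + 1) → ℝ,
      v ⬝ᵥ ((Matrix.of fun m n : Fin (M + 1) =>
          (if ((m : ℕ) + (n : ℕ)) % 2 = 0 then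
            (N : ℝ) / 2 * (1 / (1 - ((m : ℝ) + (n : ℝ)) ^ 2) +
              1 / (1 - ((m : ℝ) - (n : ℝ)) ^ 2)) else 0) +
            (if ((m : ℕ) + (n : ℕ)) % 2 = 0 then (1 : ℝ) else 0)) *ᵥ v) ≤
        (4 * (N : ℝ) + (M : ℝ) + 1) / 2 * (∑ i, v i ^ 2) := by
    intro v
    exact quad_bound M N hN v
  constructor
  · intro lam v hv heig
    have hq := key v
    rw [heig] at hq
    have hvv : v ⬝ᵥ (lam • v) = lam * ∑ i, v i ^ 2 := by
      simp only [dotProduct, Pi.smul_apply, smul_eq_mul]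
      rw [Finset.mul_sum]
      apply Finset.sum_congr rfl; intro i _; ring
    rw [hvv] at hq
    have hpos : 0 < ∑ i, v i ^ 2 := by
      obtain ⟨i, hi⟩ := Function.ne_iff.mp hv
      exact Finset.sum_pos' (fun j _ => sq_nonneg _) ⟨i, Finset.mem_univ i, lt_of_le_of_ne (sq_nonneg _) (Ne.symm (pow_ne_zero 2 hi))⟩
    exact le_of_mul_le_mul_right hq hpos
  · exact key
end
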